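/- arXiv:1808.02712 — 5 statements merged into one kernel-verified Lean document; each statement's English description precedes it below -/
import Mathlib

section
/- Let x_1,...,x_n be nonzero algebraic numbers with degrees d_1,...,d_n over ℚ such that [ℚ(x_1,...,x_n):ℚ] = d_1·d_2···d_n (the non-degenerate condition). If k_1,...,k_n are integers with x_1^{k_1}···x_n^{k_n} = 1, then x_i^{k_i} ∈ ℚ for every i. -/
open IntermediateField Module Polynomial

set_option synthInstance.maxHeartbeats 1000000 in
private lemma aux_minpoly_le {A B : IntermediateField ℚ ℂ} (h : A ≤ B) {z : ℂ}
    (hz : IsIntegral ℚ z) :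
    (minpoly B z).natDegree ≤ (minpoly A z).natDegree := by
  letI : Algebra A B := (IntermediateField.inclusion h).toAlgebra
  haveI : IsScalarTower A B ℂ := IsScalarTower.of_algebraMap_eq (fun a => rfl)
  have hzA : IsIntegral A z := hz.tower_top
  have hdvd := minpoly.dvd_map_of_isScalarTower (↥A) (↥B) z
  have h2 := Polynomial.natDegree_le_of_dvd hdvd
    ((Polynomial.map_ne_zero_iff (algebraMap (↥A) (↥B)).injective).2 (minpoly.ne_zero hzA))
  rwa [Polynomial.natDegree_map] at h2

private lemma aux_finrank_adjoin_le {n : ℕ} (x : Fin n → ℂ)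
    (hx : ∀ j, IsIntegral ℚ (x j)) (s : Finset (Fin n)) :
    finrank ℚ (IntermediateField.adjoin ℚ (x '' ↑s)) ≤
      ∏ j ∈ s, (minpoly ℚ (x j)).natDegree := by
  classical
  induction s using Finset.induction_on with
  | empty =>
      rw [Finset.coe_empty, Set.image_empty, IntermediateField.adjoin_empty]
      simp [IntermediateField.finrank_bot]
  | @insert a s ha ih =>
    rw [Finset.coe_insert, Set.image_insert_eq, Set.insert_eq,
      IntermediateField.adjoin_union, Finset.prod_insert ha]
    calc finrank ℚ ↥(IntermediateField.adjoin ℚ {x a} ⊔ IntermediateField.adjoin ℚ (x '' ↑s))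
        ≤ finrank ℚ (IntermediateField.adjoin ℚ {x a}) *
            finrank ℚ (IntermediateField.adjoin ℚ (x '' ↑s)) := finrank_sup_le _ _
      _ ≤ _ := by
          rw [show (IntermediateField.adjoin ℚ {x a}) = ℚ⟮x a⟯ from rfl,
            IntermediateField.adjoin.finrank (hx a)]
          exact Nat.mul_le_mul_left _ ih

theorem stmt_6 {n : ℕ} (x : Fin n → ℂ)
    (hx0 : ∀ i, x i ≠ 0) (hxalg : ∀ i, IsAlgebraic ℚ (x i))
    (hnd : Module.finrank ℚ (IntermediateField.adjoin ℚ (Set.range x)) =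
           ∏ i, (minpoly ℚ (x i)).natDegree)
    (k : Fin n → ℤ) (hrel : ∏ i, x i ^ k i = 1) :
    ∀ i, ∃ q : ℚ, x i ^ k i = (q : ℂ) := by
  classical
  intro i
  have hint : ∀ j, IsIntegral ℚ (x j) := fun j => isAlgebraic_iff_isIntegral.1 (hxalg j)
  set y : ℂ := x i ^ k i with hy
  set E : IntermediateField ℚ ℂ := IntermediateField.adjoin ℚ {x i} with hE
  set F : IntermediateField ℚ ℂ := IntermediateField.adjoin ℚ (x '' ({i}ᶜ)) with hF
  set K : IntermediateField ℚ ℂ := IntermediateField.adjoin ℚ (Set.range x) with hK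
  set L : IntermediateField ℚ ℂ := IntermediateField.adjoin ℚ {y} with hL
  -- memberships
  have hxiE : x i ∈ E := IntermediateField.subset_adjoin _ _ rfl
  have hyE : y ∈ E := zpow_mem hxiE _
  have hxjF : ∀ j, j ≠ i → x j ∈ F := fun j hj =>
    IntermediateField.subset_adjoin _ _ ⟨j, hj, rfl⟩
  have hyF : y ∈ F := by
    have h1 : x i ^ k i * ∏ j ∈ Finset.univ.erase i, x j ^ k j = 1 :=
      (Finset.mul_prod_erase Finset.univ (fun j => x j ^ k j) (Finset.mem_univ i)).trans hrel
    have h2 : y = (∏ j ∈ Finset.univ.erase i, x j ^ k j)⁻¹ :=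
      eq_inv_of_mul_eq_one_left h1
    rw [h2]
    exact inv_mem (prod_mem fun j hj =>
      zpow_mem (hxjF j (Finset.ne_of_mem_erase hj)) _)
  have hLE : L ≤ E := adjoin_le_iff.2 (Set.singleton_subset_iff.2 hyE)
  have hLF : L ≤ F := adjoin_le_iff.2 (Set.singleton_subset_iff.2 hyF)
  have hFK : F ≤ K := IntermediateField.adjoin.mono _ _ _ (Set.image_subset_range x _)
  -- finite dimensionality and integrality
  haveI : FiniteDimensional ℚ E := IntermediateField.adjoin.finiteDimensional (hint i)
  have hyint : IsIntegral ℚ y := by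
    have h0 : IsIntegral ℚ (⟨y, hyE⟩ : E) := IsIntegral.of_finite ℚ _
    exact (isIntegral_algebraMap_iff (algebraMap E ℂ).injective).2 h0
  haveI : FiniteDimensional ℚ L := IntermediateField.adjoin.finiteDimensional hyint
  -- degree computations
  have hEd : finrank ℚ E = (minpoly ℚ (x i)).natDegree :=
    IntermediateField.adjoin.finrank (hint i)
  have hLtower : finrank ℚ L * relfinrank L E = finrank ℚ E :=
    finrank_bot_mul_relfinrank hLE
  have hKF : finrank ℚ F * relfinrank F K = finrank ℚ K :=
    finrank_bot_mul_relfinrank hFK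
  have hLEdeg : relfinrank L E = (minpoly L (x i)).natDegree := by
    rw [relfinrank_eq_finrank_of_le hLE, extendScalars_adjoin hLE]
    exact IntermediateField.adjoin.finrank ((hint i).tower_top)
  have hFadj : IntermediateField.adjoin (↥F) (Set.range x) =
      IntermediateField.adjoin (↥F) {x i} := by
    apply le_antisymm
    · rw [adjoin_le_iff]
      rintro z ⟨j, rfl⟩
      by_cases hj : j = i
      · subst hj; exact IntermediateField.subset_adjoin _ _ rfl
      · exact (IntermediateField.adjoin (↥F) {x i}).algebraMap_mem ⟨x j, hxjF j hj⟩
    · exact IntermediateField.adjoin.mono _ _ _ (Set.singleton_subset_iff.2 ⟨i, rfl⟩)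
  have hFKdeg : relfinrank F K = (minpoly F (x i)).natDegree := by
    rw [relfinrank_eq_finrank_of_le hFK, extendScalars_adjoin hFK, hFadj]
    exact IntermediateField.adjoin.finrank ((hint i).tower_top)
  -- inequality inputs
  set P : ℕ := ∏ j ∈ Finset.univ.erase i, (minpoly ℚ (x j)).natDegree with hP
  have hFle : finrank ℚ F ≤ P := by
    have hset : (x '' ↑(Finset.univ.erase i)) = x '' ({i}ᶜ) := by
      congr 1; ext j; simp
    have := aux_finrank_adjoin_le x hint (Finset.univ.erase i)
    rw [hset] at this
    exact this
  have hprod : (∏ j, (minpoly ℚ (x j)).natDegree) = (minpoly ℚ (x i)).natDegree * P :=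
    (Finset.mul_prod_erase _ _ (Finset.mem_univ i)).symm
  have heFL : relfinrank F K ≤ relfinrank L E := by
    rw [hFKdeg, hLEdeg]; exact aux_minpoly_le hLF (hint i)
  have heLpos : 0 < relfinrank L E := by
    rw [hLEdeg]; exact minpoly.natDegree_pos ((hint i).tower_top)
  have hPpos : 0 < P := Finset.prod_pos fun j _ => minpoly.natDegree_pos (hint j)
  -- main computation
  have main : finrank ℚ L * (relfinrank L E * P) ≤ 1 * (relfinrank L E * P) := by
    calc finrank ℚ L * (relfinrank L E * P)
        = (finrank ℚ L * relfinrank L E) * P := by ring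
      _ = finrank ℚ E * P := by rw [hLtower]
      _ = (minpoly ℚ (x i)).natDegree * P := by rw [hEd]
      _ = ∏ j, (minpoly ℚ (x j)).natDegree := hprod.symm
      _ = finrank ℚ K := hnd.symm
      _ = finrank ℚ F * relfinrank F K := hKF.symm
      _ ≤ P * relfinrank L E := Nat.mul_le_mul hFle heFL
      _ = 1 * (relfinrank L E * P) := by ring
  have hm : finrank ℚ L ≤ 1 :=
    Nat.le_of_mul_le_mul_right main (Nat.mul_pos heLpos hPpos)
  have hm1 : finrank ℚ L = 1 :=
    le_antisymm hm (Module.finrank_pos)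
  have hLbot : L = ⊥ := IntermediateField.finrank_eq_one_iff.1 hm1
  have hybot : y ∈ (⊥ : IntermediateField ℚ ℂ) := by
    rw [← hLbot]; exact IntermediateField.subset_adjoin _ _ rfl
  rw [IntermediateField.mem_bot] at hybot
  obtain ⟨q, hq⟩ := hybot
  exact ⟨q, by rw [← hq, eq_ratCast]⟩
end

section
/- Let x_1,...,x_n be nonzero algebraic numbers satisfying the non-degenerate condition [ℚ(x_1,...,x_n):ℚ] = ∏_i deg(x_i), and suppose none of x_1,...,x_n is a root of rational (i.e., no positive integer power of any x_i is rational). Then x_1,...,x_n are multiplicatively independent: ∏ x_i^{k_i} = 1 with k_i ∈ ℤ implies all k_i = 0. -/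
/-- A nonzero algebraic number is a root of rational if some positive
integer power of it is rational. -/
def RootOfRational (a : ℂ) : Prop :=
  ∃ k : ℕ, 0 < k ∧ ∃ q : ℚ, a ^ k = (q : ℂ)

open Polynomial IntermediateField


/-- If every complex root of the minimal polynomial of `a` has the same `m`-th power
as `a`, then `a ^ m` is rational. -/
lemma aux_pow_rat {a : ℂ} (hint : IsIntegral ℚ a) {m : ℕ}
    (h : ∀ y ∈ (minpoly ℚ a).rootSet ℂ, y ^ m = a ^ m) :
    ∃ q : ℚ, a ^ m = (q : ℂ) := by
  set L := ℚ⟮a⟯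
  haveI : FiniteDimensional ℚ L := adjoin.finiteDimensional hint
  set g : L := AdjoinSimple.gen ℚ a
  have hgval : (g : ℂ) = a := rfl
  set b : L := g ^ m with hb
  have hbval : (b : ℂ) = a ^ m := by push_cast [hb, hgval]; ring
  have hbint : IsIntegral ℚ (a ^ m) := hint.pow m
  have hminb : minpoly ℚ (a ^ m) = minpoly ℚ b := by
    rw [← hbval]
    exact minpoly.algebraMap_eq (algebraMap L ℂ).injective b
  -- every root of minpoly ℚ (a ^ m) equals a ^ m
  have hall : ∀ y ∈ (minpoly ℚ (a ^ m)).rootSet ℂ, y = a ^ m := by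
    intro y hy
    have hy' : aeval y (minpoly ℚ b) = 0 := by
      rw [← hminb]
      exact (mem_rootSet.mp hy).2
    have hK' : ∀ s : L, IsIntegral ℚ s ∧ ((minpoly ℚ s).map (algebraMap ℚ ℂ)).Splits :=
      fun s => ⟨IsIntegral.of_finite ℚ s, IsAlgClosed.splits _⟩
    obtain ⟨φ, hφ⟩ := IntermediateField.exists_algHom_of_splits_of_aeval hK' hy'
    have hφg : φ g ∈ (minpoly ℚ a).rootSet ℂ := by
      rw [mem_rootSet]
      refine ⟨minpoly.ne_zero hint, ?_⟩
      have hga : minpoly ℚ a = minpoly ℚ g := by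
        conv_lhs => rw [← hgval]
        exact minpoly.algebraMap_eq (algebraMap L ℂ).injective g
      rw [hga, aeval_algHom_apply, minpoly.aeval, map_zero]
    have : y = (φ g) ^ m := by rw [← map_pow, ← hb, hφ]
    rw [this, h _ hφg]
  -- hence the minimal polynomial has a unique root, so degree 1
  have hmem : a ^ m ∈ (minpoly ℚ (a ^ m)).rootSet ℂ := by
    rw [mem_rootSet]
    exact ⟨minpoly.ne_zero hbint, minpoly.aeval ℚ (a ^ m)⟩
  have hsep : (minpoly ℚ (a ^ m)).Separable := (minpoly.irreducible hbint).separable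
  have hcard : Fintype.card ((minpoly ℚ (a ^ m)).rootSet ℂ) = 1 :=
    Fintype.card_eq_one_iff.mpr ⟨⟨a ^ m, hmem⟩, fun y => Subtype.ext (hall y y.2)⟩
  have hdeg : (minpoly ℚ (a ^ m)).natDegree = 1 := by
    rw [← Polynomial.card_rootSet_eq_natDegree hsep (IsAlgClosed.splits (k := ℂ) _), hcard]
  obtain ⟨q, hq⟩ := minpoly.natDegree_eq_one_iff.mp hdeg
  exact ⟨q, by rw [← hq]; norm_num⟩

theorem stmt_7 {n : ℕ} (x : Fin n → ℂ)
    (hx0 : ∀ i, x i ≠ 0) (hxalg : ∀ i, IsAlgebraic ℚ (x i))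
    (hnd : Module.finrank ℚ (IntermediateField.adjoin ℚ (Set.range x)) =
           ∏ i, (minpoly ℚ (x i)).natDegree)
    (hnr : ∀ i, ¬ RootOfRational (x i)) :
    ∀ k : Fin n → ℤ, ∏ i, x i ^ k i = 1 → ∀ i, k i = 0 := by
  classical
  intro k hk i
  by_contra hki
  have hint : ∀ j, IsIntegral ℚ (x j) := fun j => (hxalg j).isIntegral
  set K := IntermediateField.adjoin ℚ (Set.range x) with hKdef
  have hmem : ∀ j, x j ∈ K := fun j => IntermediateField.subset_adjoin ℚ _ ⟨j, rfl⟩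
  haveI : FiniteDimensional ℚ K := by
    haveI : Finite (Set.range x) := Set.finite_range x
    exact IntermediateField.finiteDimensional_adjoin
      (fun a ha => by obtain ⟨j, rfl⟩ := ha; exact hint j)
  set X : Fin n → K := fun j => ⟨x j, hmem j⟩ with hX
  have hXval : ∀ j, algebraMap K ℂ (X j) = x j := fun j => rfl
  have hsep : ∀ j, (minpoly ℚ (x j)).Separable :=
    fun j => (minpoly.irreducible (hint j)).separable
  have hroot : ∀ (σ : K →ₐ[ℚ] ℂ) j, σ (X j) ∈ (minpoly ℚ (x j)).rootSet ℂ := by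
    intro σ j
    rw [Polynomial.mem_rootSet]
    refine ⟨minpoly.ne_zero (hint j), ?_⟩
    have hmp : minpoly ℚ (x j) = minpoly ℚ (X j) := by
      conv_lhs => rw [← hXval j]
      exact minpoly.algebraMap_eq (algebraMap K ℂ).injective (X j)
    rw [hmp, Polynomial.aeval_algHom_apply, minpoly.aeval, map_zero]
  let Φ : (K →ₐ[ℚ] ℂ) → (∀ j, (minpoly ℚ (x j)).rootSet ℂ) :=
    fun σ j => ⟨σ (X j), hroot σ j⟩
  have hinj : Function.Injective Φ := by
    intro σ τ h
    apply IntermediateField.adjoin_algHom_ext ℚ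
    rintro a ⟨j, rfl⟩
    have := congrFun h j
    exact Subtype.ext_iff.mp this
  have hcard : Fintype.card (K →ₐ[ℚ] ℂ) = Fintype.card (∀ j, (minpoly ℚ (x j)).rootSet ℂ) := by
    rw [AlgHom.card, Fintype.card_pi, hnd]
    exact Finset.prod_congr rfl fun j _ =>
      (Polynomial.card_rootSet_eq_natDegree (hsep j)
        (IsAlgClosed.splits (k := ℂ) _)).symm
  have hbij : Function.Bijective Φ :=
    (Fintype.bijective_iff_injective_and_card Φ).mpr ⟨hinj, hcard⟩
  have hself : ∀ j, x j ∈ (minpoly ℚ (x j)).rootSet ℂ := fun j => by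
    rw [Polynomial.mem_rootSet]
    exact ⟨minpoly.ne_zero (hint j), minpoly.aeval ℚ (x j)⟩
  -- the relation in K
  have hkK : ∏ j, X j ^ k j = (1 : K) := by
    apply (algebraMap K ℂ).injective
    rw [map_prod, map_one]
    simpa only [map_zpow₀, hXval] using hk
  set P : ℂ := ∏ j ∈ Finset.univ.erase i, x j ^ k j with hP
  have hPne : P ≠ 0 := Finset.prod_ne_zero_iff.mpr fun j _ => zpow_ne_zero _ (hx0 j)
  have hxiP : x i ^ k i * P = 1 := by
    rw [hP, Finset.mul_prod_erase Finset.univ (fun j => x j ^ k j) (Finset.mem_univ i)]; exact hk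
  have key : ∀ y ∈ (minpoly ℚ (x i)).rootSet ℂ, y ^ k i = x i ^ k i := by
    intro y hy
    obtain ⟨σ, hσ⟩ := hbij.2 (Function.update (fun j => ⟨x j, hself j⟩) i ⟨y, hy⟩)
    have hσi : σ (X i) = y := by
      have := congrFun hσ i
      rw [Function.update_self] at this
      exact Subtype.ext_iff.mp this
    have hσj : ∀ j, j ≠ i → σ (X j) = x j := by
      intro j hj
      have := congrFun hσ j
      rw [Function.update_of_ne hj] at this
      exact Subtype.ext_iff.mp this
    have h1 : ∏ j, σ (X j) ^ k j = 1 := by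
      have := congrArg σ hkK
      rw [map_prod, map_one] at this
      simpa only [map_zpow₀] using this
    rw [← Finset.mul_prod_erase Finset.univ (fun j => σ (X j) ^ k j) (Finset.mem_univ i), hσi] at h1
    have h2 : ∏ j ∈ Finset.univ.erase i, σ (X j) ^ k j = P :=
      Finset.prod_congr rfl fun j hj => by rw [hσj j (Finset.mem_erase.mp hj).1]
    rw [h2] at h1
    have := h1.trans hxiP.symm
    exact mul_right_cancel₀ hPne this
  set m : ℕ := (k i).natAbs with hm
  have hmpos : 0 < m := Int.natAbs_pos.mpr hki
  have key' : ∀ y ∈ (minpoly ℚ (x i)).rootSet ℂ, y ^ m = x i ^ m := by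
    intro y hy
    have hy' := key y hy
    have hyne : y ≠ 0 := by
      intro h0
      rw [h0, zero_zpow _ hki] at hy'
      exact zpow_ne_zero (k i) (hx0 i) hy'.symm
    rcases Int.natAbs_eq (k i) with h | h
    · rw [h, zpow_natCast, zpow_natCast] at hy'; exact hy'
    · rw [h, zpow_neg, zpow_neg, zpow_natCast, zpow_natCast, inv_inj] at hy'; exact hy'
  obtain ⟨q, hq⟩ := aux_pow_rat (hint i) key'
  exact hnr i ⟨m, hmpos, q, hq⟩
end

section
/- Let F be a field, α algebraic over F with E = F(α), [E:F] = d, and suppose α^m ∈ F for some positive integer m. If f(t) is the monic minimal polynomial of α over F, then there exists ζ with ζ^m = 1 such that ζ·α^d = (−1)^d f(0) ∈ F. -/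
theorem stmt_12 (F Ω : Type*) [Field F] [Field Ω] [Algebra F Ω]
    (α : Ω) (hα : α ≠ 0) (hint : IsIntegral F α)
    (m : ℕ) (hm : 0 < m) (hpow : α ^ m ∈ (algebraMap F Ω).range)
    (d : ℕ) (hd : d = (minpoly F α).natDegree) :
    ∃ ζ : Ω, ζ ^ m = 1 ∧
      ζ * α ^ d = algebraMap F Ω ((-1) ^ d * (minpoly F α).coeff 0) := by
  obtain ⟨a, ha⟩ := hpow
  -- key identity in F: ((-1)^d * f(0))^m = a^d
  have key : ((-1 : F) ^ d * (minpoly F α).coeff 0) ^ m = a ^ d := by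
    set K := IntermediateField.adjoin F {α}
    let g : K := IntermediateField.AdjoinSimple.gen F α
    have hming : minpoly F g = minpoly F α :=
      IntermediateField.minpoly_gen F α
    let pb := IntermediateField.adjoin.powerBasis hint (x := α)
    have hpbgen : pb.gen = g := rfl
    have hdim : pb.dim = d := by
      simp [pb, IntermediateField.adjoin.powerBasis, hming, hd]
    have hnorm : Algebra.norm F g = (-1 : F) ^ d * (minpoly F α).coeff 0 := by
      have := Algebra.PowerBasis.norm_gen_eq_coeff_zero_minpoly pb
      rw [hpbgen, hdim] at this
      rw [this, hming]
    have hfin : Module.finrank F K = d := by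
      rw [IntermediateField.adjoin.finrank hint, hd]
    have hga : g ^ m = algebraMap F K a := by
      apply Subtype.ext
      push_cast
      rw [IntermediateField.AdjoinSimple.coe_gen]
      exact ha.symm
    calc ((-1 : F) ^ d * (minpoly F α).coeff 0) ^ m
        = (Algebra.norm F g) ^ m := by rw [hnorm]
      _ = Algebra.norm F (g ^ m) := (map_pow (Algebra.norm F) g m).symm
      _ = Algebra.norm F (algebraMap F K a) := by rw [hga]
      _ = a ^ d := by rw [Algebra.norm_algebraMap, hfin]
  have haΩ : algebraMap F Ω a ≠ 0 := by
    rw [ha]; exact pow_ne_zero m hα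
  refine ⟨algebraMap F Ω ((-1) ^ d * (minpoly F α).coeff 0) / α ^ d, ?_, ?_⟩
  · rw [div_pow, ← map_pow, key, map_pow, ha, ← pow_mul, ← pow_mul, Nat.mul_comm,
      div_self (pow_ne_zero _ hα)]
  · rw [div_mul_cancel₀ _ (pow_ne_zero d hα)]
end

section
/- Let a be a nonzero algebraic number with minimal polynomial p whose complex roots are z_1,...,z_d. If z_i/z_j is a root of unity for some i ≠ j, then a is degree reducible: there exists an integer m ≥ 1 with deg(a^m) < deg(a). -/
open IntermediateField Polynomial

theorem stmt_15 (a : ℂ) (ha : a ≠ 0) (halg : IsAlgebraic ℚ a)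
    (zi zj : ℂ) (hzi : zi ∈ (minpoly ℚ a).rootSet ℂ)
    (hzj : zj ∈ (minpoly ℚ a).rootSet ℂ) (hne : zi ≠ zj)
    (hroot : ∃ k : ℕ, 0 < k ∧ (zi / zj) ^ k = 1) :
    ∃ m : ℕ, 1 ≤ m ∧ (minpoly ℚ (a ^ m)).natDegree < (minpoly ℚ a).natDegree := by
  obtain ⟨k, hk, hpow⟩ := hroot
  have hint : IsIntegral ℚ a := halg.isIntegral
  have hpne : minpoly ℚ a ≠ 0 := minpoly.ne_zero hint
  rw [Polynomial.mem_rootSet] at hzi hzj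
  have hzj0 : zj ≠ 0 := by
    intro h
    apply ha
    have : (Polynomial.aeval (0 : ℂ)) (minpoly ℚ a) = 0 := h ▸ hzj.2
    rw [← Polynomial.coeff_zero_eq_aeval_zero'] at this
    have h0 : (minpoly ℚ a).coeff 0 = 0 := by
      exact_mod_cast (_root_.map_eq_zero (algebraMap ℚ ℂ)).mp this
    exact (minpoly.coeff_zero_eq_zero hint).mp h0
  have hzz : zi ^ k = zj ^ k := by
    rw [div_pow, div_eq_one_iff_eq (pow_ne_zero k hzj0)] at hpow
    exact hpow
  refine ⟨k, hk, ?_⟩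
  by_contra hcon
  push_neg at hcon
  have hintk : IsIntegral ℚ (a ^ k) := hint.pow k
  haveI : FiniteDimensional ℚ ℚ⟮a⟯ := adjoin.finiteDimensional hint
  have hle : ℚ⟮a ^ k⟯ ≤ ℚ⟮a⟯ :=
    adjoin_simple_le_iff.mpr (pow_mem (mem_adjoin_simple_self ℚ a) k)
  have heq : ℚ⟮a ^ k⟯ = ℚ⟮a⟯ := eq_of_le_of_finrank_le hle (by
    rw [adjoin.finrank hint, adjoin.finrank hintk]; exact hcon)
  have hamem : a ∈ ℚ⟮a ^ k⟯ := heq ▸ mem_adjoin_simple_self ℚ a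
  have hamem' : a ∈ Algebra.adjoin ℚ ({a ^ k} : Set ℂ) := by
    rw [← adjoin_simple_toSubalgebra_of_isAlgebraic hintk.isAlgebraic] at *
    exact hamem
  rw [Algebra.adjoin_singleton_eq_range_aeval] at hamem'
  obtain ⟨f, hf⟩ := hamem'
  -- lift the relation to ℚ⟮a⟯
  set g : ℚ⟮a⟯ := AdjoinSimple.gen ℚ a with hg
  have hgf : Polynomial.aeval (g ^ k) f = g := by
    have h1 : (ℚ⟮a⟯.val) (Polynomial.aeval (g ^ k) f) = a := by
      rw [← Polynomial.aeval_algHom_apply]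
      simpa [hg] using hf
    exact Subtype.ext (h1.trans (AdjoinSimple.coe_gen ℚ a).symm)
  -- two embeddings
  have hzi' : zi ∈ (minpoly ℚ a).aroots ℂ := by
    rw [Polynomial.mem_aroots]; exact ⟨hpne, hzi.2⟩
  have hzj' : zj ∈ (minpoly ℚ a).aroots ℂ := by
    rw [Polynomial.mem_aroots]; exact ⟨hpne, hzj.2⟩
  set σ := (algHomAdjoinIntegralEquiv ℚ hint).symm ⟨zi, hzi'⟩ with hσ
  set τ := (algHomAdjoinIntegralEquiv ℚ hint).symm ⟨zj, hzj'⟩ with hτ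
  have hσg : σ g = zi := algHomAdjoinIntegralEquiv_symm_apply_gen ℚ hint _
  have hτg : τ g = zj := algHomAdjoinIntegralEquiv_symm_apply_gen ℚ hint _
  apply hne
  calc zi = σ g := hσg.symm
    _ = σ (Polynomial.aeval (g ^ k) f) := by rw [hgf]
    _ = Polynomial.aeval (σ (g ^ k)) f := (Polynomial.aeval_algHom_apply σ (g ^ k) f).symm
    _ = Polynomial.aeval (σ g ^ k) f := by rw [map_pow]
    _ = Polynomial.aeval (zj ^ k) f := by rw [hσg, hzz]
    _ = Polynomial.aeval (τ g ^ k) f := by rw [hτg]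
    _ = Polynomial.aeval (τ (g ^ k)) f := by rw [map_pow]
    _ = τ (Polynomial.aeval (g ^ k) f) := Polynomial.aeval_algHom_apply τ (g ^ k) f
    _ = τ g := by rw [hgf]
    _ = zj := hτg
end

section
/- Let δ_1,...,δ_l be multiplicatively independent nonzero rational numbers, and let γ_1,...,γ_t be nonzero algebraic numbers, none of which is a root of rational, satisfying the non-degenerate condition [ℚ(γ_1,...,γ_t):ℚ] = ∏_i deg(γ_i). Then the combined sequence δ_1,...,δ_l,γ_1,...,γ_t is multiplicatively independent. -/
open IntermediateField Polynomial Module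

set_option synthInstance.maxHeartbeats 1000000
set_option maxHeartbeats 1000000

lemma range_split {t : ℕ} (γ : Fin (t + 1) → ℂ) :
    Set.range γ = Set.range (γ ∘ Fin.castSucc) ∪ {γ (Fin.last t)} := by
  ext y
  constructor
  · rintro ⟨j, rfl⟩
    induction j using Fin.lastCases with
    | last => exact Or.inr rfl
    | cast i => exact Or.inl ⟨i, rfl⟩
  · rintro (⟨j, rfl⟩ | hy)
    · exact ⟨Fin.castSucc j, rfl⟩
    · exact ⟨Fin.last t, hy.symm ▸ rfl⟩

lemma minpoly_natDegree_le' (F : IntermediateField ℚ ℂ) {x : ℂ} (hx : IsIntegral ℚ x) :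
    (minpoly F x).natDegree ≤ (minpoly ℚ x).natDegree := by
  have hdvd := minpoly.dvd_map_of_isScalarTower ℚ F x
  have hmono : ((minpoly ℚ x).map (algebraMap ℚ F)).Monic := (minpoly.monic hx).map _
  calc (minpoly F x).natDegree ≤ ((minpoly ℚ x).map (algebraMap ℚ F)).natDegree :=
        natDegree_le_of_dvd hdvd hmono.ne_zero
    _ = (minpoly ℚ x).natDegree :=
        natDegree_map_eq_of_injective (algebraMap ℚ F).injective _

lemma fd_adjoin_range {t : ℕ} (γ : Fin t → ℂ) (hint : ∀ j, IsIntegral ℚ (γ j)) :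
    FiniteDimensional ℚ (adjoin ℚ (Set.range γ)) := by
  haveI : Finite (Set.range γ) := Set.finite_range γ
  exact finiteDimensional_adjoin (fun x hx => by obtain ⟨j, rfl⟩ := hx; exact hint j)

lemma finrank_adjoin_le : ∀ (t : ℕ) (γ : Fin t → ℂ), (∀ j, IsIntegral ℚ (γ j)) →
    finrank ℚ (adjoin ℚ (Set.range γ)) ≤ ∏ j, (minpoly ℚ (γ j)).natDegree := by
  intro t
  induction t with
  | zero =>
    intro γ _
    have : Set.range γ = (∅ : Set ℂ) := Set.range_eq_empty γ
    rw [this, adjoin_empty]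
    simp [IntermediateField.finrank_bot]
  | succ t ih =>
    intro γ hint
    set γ' := γ ∘ Fin.castSucc with hγ'
    set x := γ (Fin.last t) with hx
    set F := adjoin ℚ (Set.range γ') with hF
    have hxint : IsIntegral ℚ x := hint _
    have hxF : IsIntegral F x := hxint.tower_top
    haveI : FiniteDimensional ℚ F := fd_adjoin_range γ' (fun j => hint _)
    haveI : FiniteDimensional F (adjoin F {x}) := adjoin.finiteDimensional hxF
    have hres : (adjoin F {x}).restrictScalars ℚ = adjoin ℚ (Set.range γ) := by
      rw [hF]; erw [adjoin_adjoin_left]; rw [range_split γ]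
    have htower : finrank ℚ F * finrank F (adjoin F {x}) = finrank ℚ (adjoin ℚ (Set.range γ)) := by
      rw [← hres]; exact Module.finrank_mul_finrank ℚ F (adjoin F {x})
    rw [← htower, Fin.prod_univ_castSucc]
    have h1 := ih γ' (fun j => hint _)
    have h2 : finrank F (adjoin F {x}) ≤ (minpoly ℚ x).natDegree := by
      rw [adjoin.finrank hxF]; exact minpoly_natDegree_le' F hxint
    exact Nat.mul_le_mul h1 h2

lemma pow_rat_of_minpoly_eq (F : IntermediateField ℚ ℂ) {x : ℂ}
    (hx : IsIntegral ℚ x)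
    (hdeg : (minpoly F x).natDegree = (minpoly ℚ x).natDegree)
    {n : ℕ} (hmem : x ^ n ∈ F) :
    ∃ q : ℚ, x ^ n = (q : ℂ) := by
  set β : ℂ := x ^ n with hβ
  have hβint : IsIntegral ℚ β := hx.pow n
  set E : IntermediateField ℚ ℂ := ℚ⟮β⟯ with hE
  have hβE : β ∈ E := mem_adjoin_simple_self ℚ β
  have hEF : E ≤ F := by
    rw [hE, adjoin_le_iff]; simpa using hmem
  have hxE : IsIntegral E x := hx.tower_top
  have hxF : IsIntegral F x := hx.tower_top
  haveI : FiniteDimensional ℚ E := adjoin.finiteDimensional hβint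
  haveI : FiniteDimensional E (adjoin E {x}) := adjoin.finiteDimensional hxE
  -- (E⟮x⟯).restrictScalars ℚ = ℚ⟮x⟯
  have hres : (adjoin E {x}).restrictScalars ℚ = ℚ⟮x⟯ := by
    rw [hE]; erw [adjoin_adjoin_left]
    apply le_antisymm
    · rw [adjoin_le_iff]
      intro y hy
      rcases hy with hy | hy
      · rw [Set.mem_singleton_iff] at hy
        rw [hy, hβ]
        exact pow_mem (mem_adjoin_simple_self ℚ x) n
      · rw [Set.mem_singleton_iff] at hy
        rw [hy]
        exact mem_adjoin_simple_self ℚ x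
    · exact adjoin.mono _ _ _ (by simp)
  -- tower
  have htower : finrank ℚ E * finrank E (adjoin E {x}) = finrank ℚ ℚ⟮x⟯ := by
    rw [← hres]
    exact Module.finrank_mul_finrank ℚ E (adjoin E {x})
  have hm : finrank E (adjoin E {x}) = (minpoly E x).natDegree := adjoin.finrank hxE
  have hd : finrank ℚ (ℚ⟮x⟯) = (minpoly ℚ x).natDegree := adjoin.finrank hx
  -- minpoly F x degree ≤ minpoly E x degree
  have hmapalg : (algebraMap F ℂ).comp (inclusion hEF).toRingHom = algebraMap E ℂ := by
    ext y; rfl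
  have hq : aeval x ((minpoly E x).map (inclusion hEF).toRingHom) = 0 := by
    rw [aeval_def, eval₂_map, hmapalg, ← aeval_def, minpoly.aeval]
  have hmono : ((minpoly E x).map (inclusion hEF).toRingHom).Monic :=
    (minpoly.monic hxE).map _
  have hle : (minpoly F x).natDegree ≤ (minpoly E x).natDegree := by
    have hdvd := minpoly.dvd F x hq
    calc (minpoly F x).natDegree ≤ ((minpoly E x).map (inclusion hEF).toRingHom).natDegree :=
          natDegree_le_of_dvd hdvd hmono.ne_zero
      _ = (minpoly E x).natDegree := natDegree_map_eq_of_injective (inclusion hEF).toRingHom.injective _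
  -- so finrank ℚ E = 1
  have hmpos : 0 < (minpoly E x).natDegree := minpoly.natDegree_pos hxE
  have hone : finrank ℚ E = 1 := by
    have h1 : (minpoly ℚ x).natDegree ≤ (minpoly E x).natDegree := hdeg ▸ hle
    have h2 : finrank ℚ E * (minpoly E x).natDegree = (minpoly ℚ x).natDegree := by
      rw [← hm, ← hd]; exact htower
    nlinarith [Module.finrank_pos (R := ℚ) (M := E)]
  have : β ∈ (algebraMap ℚ ℂ).range := by
    rw [← minpoly.natDegree_eq_one_iff, ← adjoin.finrank hβint, ← hone]
  obtain ⟨q, hqq⟩ := this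
  exact ⟨q, hqq.symm⟩

lemma key_lemma : ∀ (t : ℕ) (γ : Fin t → ℂ), (∀ j, γ j ≠ 0) → (∀ j, IsIntegral ℚ (γ j)) →
    (∀ j, ¬ RootOfRational (γ j)) →
    finrank ℚ (adjoin ℚ (Set.range γ)) = ∏ j, (minpoly ℚ (γ j)).natDegree →
    ∀ c : Fin t → ℤ, (∃ q : ℚ, ∏ j, γ j ^ c j = (q : ℂ)) → ∀ j, c j = 0 := by
  intro t
  induction t with
  | zero => intro γ _ _ _ _ c _ j; exact absurd j.pos (by simp)
  | succ t ih =>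
    intro γ h0 hint hnr hnd c hq
    set γ' := γ ∘ Fin.castSucc with hγ'
    set x := γ (Fin.last t) with hxdef
    set F := adjoin ℚ (Set.range γ') with hF
    have hxint : IsIntegral ℚ x := hint _
    have hxF : IsIntegral F x := hxint.tower_top
    haveI : FiniteDimensional ℚ F := fd_adjoin_range γ' (fun j => hint _)
    haveI : FiniteDimensional F (adjoin F {x}) := adjoin.finiteDimensional hxF
    have hres : (adjoin F {x}).restrictScalars ℚ = adjoin ℚ (Set.range γ) := by
      rw [hF]; erw [adjoin_adjoin_left]; rw [range_split γ]
    have htower : finrank ℚ F * finrank F (adjoin F {x})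
        = finrank ℚ (adjoin ℚ (Set.range γ)) := by
      rw [← hres]; exact Module.finrank_mul_finrank ℚ F (adjoin F {x})
    -- split the degree condition
    have hprod : (∏ j : Fin t, (minpoly ℚ (γ (Fin.castSucc j))).natDegree) * (minpoly ℚ x).natDegree
        = ∏ j, (minpoly ℚ (γ j)).natDegree :=
      (Fin.prod_univ_castSucc (fun j => (minpoly ℚ (γ j)).natDegree)).symm
    have ha : finrank ℚ F ≤ ∏ j : Fin t, (minpoly ℚ (γ (Fin.castSucc j))).natDegree :=
      finrank_adjoin_le t γ' (fun j => hint _)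
    have hb : finrank F (adjoin F {x}) ≤ (minpoly ℚ x).natDegree := by
      rw [adjoin.finrank hxF]; exact minpoly_natDegree_le' F hxint
    have heq : finrank ℚ F * finrank F (adjoin F {x})
        = (∏ j : Fin t, (minpoly ℚ (γ (Fin.castSucc j))).natDegree) * (minpoly ℚ x).natDegree := by
      rw [htower, hnd, ← hprod]
    have hbpos : 0 < finrank F (adjoin F {x}) := finrank_pos
    have hapos : 0 < finrank ℚ F := finrank_pos
    have haeq : finrank ℚ F = ∏ j : Fin t, (minpoly ℚ (γ (Fin.castSucc j))).natDegree := by nlinarith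
    have hbeq : finrank F (adjoin F {x}) = (minpoly ℚ x).natDegree := by nlinarith
    have hdeg : (minpoly F x).natDegree = (minpoly ℚ x).natDegree := by
      rw [← adjoin.finrank hxF]; exact hbeq
    -- product membership
    obtain ⟨q, hq⟩ := hq
    rw [Fin.prod_univ_castSucc] at hq
    set P := ∏ j : Fin t, γ (Fin.castSucc j) ^ c (Fin.castSucc j) with hP
    have hPF : P ∈ F := by
      apply prod_mem
      intro j _
      have hmemj : γ' j ∈ Set.range γ' := ⟨j, rfl⟩
      exact zpow_mem (subset_adjoin ℚ (Set.range γ') hmemj) _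
    have hPne : P ≠ 0 := by
      apply Finset.prod_ne_zero_iff.mpr
      intro j _
      exact zpow_ne_zero _ (h0 _)
    have hqF : (q : ℂ) ∈ F := by
      have := F.algebraMap_mem q
      rwa [eq_ratCast (algebraMap ℚ ℂ) q] at this
    have hxcF : x ^ c (Fin.last t) ∈ F := by
      have : x ^ c (Fin.last t) = (q : ℂ) * P⁻¹ := by
        field_simp at hq ⊢
        linear_combination hq
      rw [this]
      exact mul_mem hqF (inv_mem hPF)
    have hclast : c (Fin.last t) = 0 := by
      by_contra hc
      have hn : 0 < (c (Fin.last t)).natAbs := Int.natAbs_pos.mpr hc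
      have hmem : x ^ (c (Fin.last t)).natAbs ∈ F := by
        rcases Int.natAbs_eq (c (Fin.last t)) with h | h
        · rw [← zpow_natCast, ← h]; exact hxcF
        · rw [← zpow_natCast, ← neg_neg ((c (Fin.last t)).natAbs : ℤ), ← h, zpow_neg]
          exact inv_mem hxcF
      obtain ⟨q', hq'⟩ := pow_rat_of_minpoly_eq F hxint hdeg hmem
      exact hnr (Fin.last t) ⟨(c (Fin.last t)).natAbs, hn, q', hq'⟩
    have hPq : P = (q : ℂ) := by
      rw [hclast, zpow_zero, mul_one] at hq
      exact hq
    have hrest : ∀ j : Fin t, c (Fin.castSucc j) = 0 := by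
      apply ih γ' (fun j => h0 _) (fun j => hint _) (fun j => hnr _) haeq
      exact ⟨q, hPq⟩
    intro j
    induction j using Fin.lastCases with
    | last => exact hclast
    | cast i => exact hrest i


theorem stmt_16 {l t : ℕ} (δ : Fin l → ℚ) (hδ0 : ∀ i, δ i ≠ 0)
    (hδind : ∀ k : Fin l → ℤ, ∏ i, (δ i) ^ k i = 1 → ∀ i, k i = 0)
    (γ : Fin t → ℂ) (hγ0 : ∀ j, γ j ≠ 0) (hγalg : ∀ j, IsAlgebraic ℚ (γ j))
    (hγnr : ∀ j, ¬ RootOfRational (γ j))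
    (hnd : Module.finrank ℚ (IntermediateField.adjoin ℚ (Set.range γ)) =
           ∏ j, (minpoly ℚ (γ j)).natDegree) :
    ∀ (k : Fin l → ℤ) (c : Fin t → ℤ),
      (∏ i, ((δ i : ℂ)) ^ k i) * ∏ j, γ j ^ c j = 1 →
      (∀ i, k i = 0) ∧ (∀ j, c j = 0) := by
  intro k c h
  have hint : ∀ j, IsIntegral ℚ (γ j) := fun j => (hγalg j).isIntegral
  set q0 : ℚ := ∏ i, δ i ^ k i with hq0def
  have hq0 : ((q0 : ℂ)) = ∏ i, ((δ i : ℂ)) ^ k i := by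
    rw [hq0def]; push_cast; rfl
  have hq0ne : q0 ≠ 0 := by
    rw [hq0def]
    apply Finset.prod_ne_zero_iff.mpr
    intro i _
    exact zpow_ne_zero _ (hδ0 i)
  have hγprod : ∏ j, γ j ^ c j = ((q0⁻¹ : ℚ) : ℂ) := by
    have hne : (q0 : ℂ) ≠ 0 := by exact_mod_cast hq0ne
    push_cast
    rw [← hq0] at h
    field_simp
    linear_combination h
  have hc : ∀ j, c j = 0 := key_lemma t γ hγ0 hint hγnr hnd c ⟨q0⁻¹, hγprod⟩
  have hγone : ∏ j, γ j ^ c j = 1 := by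
    apply Finset.prod_eq_one
    intro j _
    rw [hc j, zpow_zero]
  have hq1 : q0 = 1 := by
    rw [hγone, mul_one, ← hq0] at h
    exact_mod_cast h
  exact ⟨hδind k (hq0def ▸ hq1), hc⟩
end
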